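/- Let N ⊆ M be a connected inclusion of finite dimensional C*-algebras with its unique Markov trace tr, and let α₀ be a *-automorphism of M with α₀(N) = N. Then α₀ is automatically trace-preserving: tr ∘ α₀ = tr. -/
import Mathlib


/- STATEMENT 8: Let N ⊆ M be a connected inclusion of finite dimensional C*-algebras
with its unique Markov trace tr of modulus τ, and let α₀ be a *-automorphism of M with
α₀(N) = N.  Then α₀ is automatically trace-preserving: tr ∘ α₀ = tr.

A Markov trace of modulus τ is a faithful positive tracial state s on M admitting an
extension to a basic construction-type algebra: an embedding ι of M into a star algebra
containing a projection e with e ι(x) e ∈ ι(N) e for all x ∈ M, together with a trace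
Tr extending s and satisfying Tr(ι(x) e) = τ s(x).  Connectedness of the inclusion is
reflected in the uniqueness hypothesis on the Markov trace. -/

structure MarkovExtension {M : Type*} [Ring M] [StarRing M] [Algebra ℂ M] [StarModule ℂ M]
    (N : StarSubalgebra ℂ M) (τ : ℂ) (s : M →ₗ[ℂ] ℂ) where
  carrier : Type
  [ringA : Ring carrier]
  [starA : StarRing carrier]
  [algA : Algebra ℂ carrier]
  emb : M →⋆ₐ[ℂ] carrier
  jproj : carrier
  Tr : carrier →ₗ[ℂ] ℂ
  inj : Function.Injective emb
  idem : jproj * jproj = jproj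
  sa : star jproj = jproj
  jones : ∀ x : M, ∃ y ∈ N, jproj * emb x * jproj = emb y * jproj
  trace : ∀ x y : carrier, Tr (x * y) = Tr (y * x)
  extends' : ∀ x : M, Tr (emb x) = s x
  markov : ∀ x : M, Tr (emb x * jproj) = τ * s x

/-- `s` is a Markov trace of modulus `τ` for the inclusion `N ⊆ M`. -/
def IsMarkovTrace {M : Type*} [Ring M] [StarRing M] [Algebra ℂ M] [StarModule ℂ M]
    (N : StarSubalgebra ℂ M) (τ : ℂ) (s : M →ₗ[ℂ] ℂ) : Prop :=
  s 1 = 1 ∧ (∀ x y : M, s (x * y) = s (y * x)) ∧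
  (∀ x : M, 0 ≤ (s (star x * x)).re ∧ (s (star x * x)).im = 0) ∧
  (∀ x : M, s (star x * x) = 0 → x = 0) ∧
  Nonempty (MarkovExtension N τ s)

theorem stmt8 {M : Type*} [Ring M] [StarRing M] [Algebra ℂ M] [StarModule ℂ M] [FiniteDimensional ℂ M]
    (N : StarSubalgebra ℂ M) (τ : ℂ) (tr : M →ₗ[ℂ] ℂ)
    (htr : IsMarkovTrace N τ tr)
    (huniq : ∀ s : M →ₗ[ℂ] ℂ, IsMarkovTrace N τ s → s = tr)
    (α₀ : M ≃⋆ₐ[ℂ] M) (hα₀ : ∀ x : M, x ∈ N ↔ α₀ x ∈ N) :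
    ∀ x : M, tr (α₀ x) = tr x := by

  -- Define s = tr ∘ α₀ as a linear map.
  set s : M →ₗ[ℂ] ℂ :=
    { toFun := fun x => tr (α₀ x)
      map_add' := fun x y => by simp [map_add]
      map_smul' := fun c x => by simp [map_smul] } with hs
  have key : s = tr := by
    apply huniq
    obtain ⟨h1, h2, h3, h4, ⟨E⟩⟩ := htr
    refine ⟨by simpa [hs] using h1, ?_, ?_, ?_, ?_⟩
    · intro x y
      simp only [hs, LinearMap.coe_mk, AddHom.coe_mk, map_mul]
      exact h2 _ _
    · intro x
      have : (α₀ : M ≃⋆ₐ[ℂ] M) (star x * x) = star (α₀ x) * α₀ x := by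
        simp [map_mul, map_star]
      simpa [hs, this] using h3 (α₀ x)
    · intro x hx
      have : (α₀ : M ≃⋆ₐ[ℂ] M) (star x * x) = star (α₀ x) * α₀ x := by
        simp [map_mul, map_star]
      have := h4 (α₀ x) (by simpa [hs, this] using hx)
      have := congrArg α₀.symm this
      simpa using this
    · letI := E.ringA; letI := E.starA; letI := E.algA
      refine ⟨⟨E.carrier, E.emb.comp (α₀ : M →⋆ₐ[ℂ] M), E.jproj, E.Tr, ?_, E.idem, E.sa,
        ?_, E.trace, ?_, ?_⟩⟩
      · exact E.inj.comp α₀.injective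
      · intro x
        obtain ⟨y, hy, h⟩ := E.jones (α₀ x)
        refine ⟨α₀.symm y, ?_, ?_⟩
        · rw [hα₀]; simpa using hy
        · simpa using h
      · intro x; simpa [hs] using E.extends' (α₀ x)
      · intro x; simpa [hs] using E.markov (α₀ x)
  intro x
  have := congrArg (fun f : M →ₗ[ℂ] ℂ => f x) key
  simpa [hs] using this
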